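/- arXiv:1405.2560 — 2 statements merged into one kernel-verified Lean document; each statement's English description precedes it below -/
import Mathlib

section
/- Let π be a permutation of length n > 2 with exactly one descent. If π contains a triple adjacency (three letters c, c+1, c+2 in consecutive positions), then μ(1, π) = 0. -/
/-- Two lists of naturals are order-isomorphic: same length and same relative order. -/
def OrdIso (a b : List ℕ) : Prop :=
  a.length = b.length ∧
    ∀ i, i < a.length → ∀ j, j < a.length →
      (a.getD i 0 < a.getD j 0 ↔ b.getD i 0 < b.getD j 0)

instance (a b : List ℕ) : Decidable (OrdIso a b) := by unfold OrdIso; infer_instance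

/-- `σ` occurs as a pattern in `π`: some subsequence of `π` is order-isomorphic to `σ`. -/
def occursIn (σ π : List ℕ) : Prop := ∃ s ∈ π.sublists, OrdIso σ s

instance (σ π : List ℕ) : Decidable (occursIn σ π) := by unfold occursIn; infer_instance

/-- `l` is a permutation of `1, …, l.length`. -/
def IsPermList (l : List ℕ) : Prop := l.Perm ((List.range l.length).map (· + 1))

/-- The number of descents of `l` (positions `i` with `l i > l (i+1)`, 0-based). -/
def des (l : List ℕ) : ℕ :=
  ((List.range (l.length - 1)).filter (fun i => decide (l.getD (i+1) 0 < l.getD i 0))).length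

/-- `d_π(c)`: one plus the number of descents of `π` preceding the letter `c`. -/
def dval (l : List ℕ) (c : ℕ) : ℕ :=
  1 + ((List.range (l.idxOf c)).filter (fun i => decide (l.getD (i+1) 0 < l.getD i 0))).length

/-- The word `f(π) = d_π(1) d_π(2) ⋯ d_π(n)`. -/
def fword (l : List ℕ) : List ℕ := (List.range l.length).map (fun i => dval l (i+1))

/-- The largest letter of the word `w`. -/
def maxLetter (w : List ℕ) : ℕ := w.foldr max 0

/-- `p_w(j)`: positions (1-based, increasing) of the letter `j` in `w`. -/
def posList (w : List ℕ) (j : ℕ) : List ℕ :=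
  ((List.range w.length).filter (fun i => decide (w.getD i 0 = j))).map (· + 1)

/-- `g(w)`: the concatenation of the position lists `p_w(1), …, p_w(max w)`. -/
def gperm (w : List ℕ) : List ℕ := (List.range (maxLetter w)).flatMap (fun j => posList w (j+1))

/-- Membership in the poset 𝒜̂: positive letters, every letter in `{1,…,max w}` occurs,
and the rightmost occurrence of each `i < max w` is preceded by an occurrence of `i+1`. -/
def InAhat (w : List ℕ) : Prop :=
  (∀ x ∈ w, 1 ≤ x) ∧
  (∀ i, i < maxLetter w → i + 1 ∈ w) ∧
  (∀ i, i < maxLetter w - 1 → ∃ t, t < w.length ∧ w.getD t 0 = i + 1 ∧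
     (∀ s, s < w.length → t < s → w.getD s 0 ≠ i + 1) ∧ ∃ u, u < t ∧ w.getD u 0 = i + 2)

instance (w : List ℕ) : Decidable (InAhat w) := by unfold InAhat; infer_instance

/-- All permutations (as lists on `1..k`) of every length `k ≤ n`. -/
def permsUpTo (n : ℕ) : List (List ℕ) :=
  (List.range (n+1)).flatMap (fun k => ((List.range k).map (· + 1)).permutations)

/-- The interval `[a,b]` in the pattern containment poset, as a list. -/
def intervalList (a b : List ℕ) : List (List ℕ) :=
  (permsUpTo b.length).filter (fun z => decide (occursIn a z ∧ occursIn z b))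

/-- `μ` is the Möbius function of the poset of permutations under pattern containment:
`μ(a,a) = 1` and, for `a < b`, `∑_{a ≤ z ≤ b} μ(a,z) = 0`. -/
def MoebiusOn (μ : List ℕ → List ℕ → ℤ) : Prop :=
  (∀ a, μ a a = 1) ∧
  ∀ a b, IsPermList a → IsPermList b → occursIn a b → a ≠ b →
    ((intervalList a b).map (μ a)).sum = 0

/-- All lists of length `n` with entries in `{0, …, k-1}`. -/
def listsOf (n k : ℕ) : List (List ℕ) :=
  (List.range n).foldr (fun _ acc => (List.range k).flatMap (fun a => acc.map (a :: ·))) [[]]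

/-- The letters of `π` in the nonzero positions of `η`. -/
def embOcc (η π : List ℕ) : List ℕ :=
  ((List.range π.length).filter (fun i => decide (η.getD i 0 ≠ 0))).map (fun i => π.getD i 0)

/-- `η` is an embedding of `σ` in `π`: a sequence of length `|π|` whose nonzero positions
are the positions of an occurrence of `σ` in `π` and whose nonzero letters spell `σ`. -/
def IsEmbedding (η σ π : List ℕ) : Prop :=
  η.length = π.length ∧ η.filter (fun x => decide (x ≠ 0)) = σ ∧ OrdIso σ (embOcc η π)

/-- `η` is a normal embedding: nonzero at every letter of `π` lying in the tail of an
adjacency (i.e. every position whose predecessor holds the previous value). -/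
def IsNormalEmbedding (η σ π : List ℕ) : Prop :=
  IsEmbedding η σ π ∧
    ∀ i, i < π.length → 0 < i → π.getD i 0 = π.getD (i-1) 0 + 1 → η.getD i 0 ≠ 0

instance (η σ π : List ℕ) : Decidable (IsNormalEmbedding η σ π) := by
  unfold IsNormalEmbedding IsEmbedding; infer_instance

/-- The number of normal embeddings of `σ` in `π`. -/
def normalCount (σ π : List ℕ) : ℕ :=
  ((listsOf π.length (σ.length + 1)).filter (fun η => decide (IsNormalEmbedding η σ π))).length

/-- The total number of letters in all tails of all adjacencies of `π`;
equivalently, the number of adjacency pairs of `π`. -/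
def tailCount (π : List ℕ) : ℕ :=
  ((List.range π.length).filter (fun i => decide (0 < i ∧ π.getD i 0 = π.getD (i-1) 0 + 1))).length

/-- The number of occurrences of `σ` as a pattern in `π`. -/
def occCount (σ π : List ℕ) : ℕ :=
  ((List.range π.length).sublists.filter
    (fun s => decide (OrdIso σ (s.map (fun i => π.getD i 0))))).length

/-- All words of length `n` on the alphabet `{1, …, k}`. -/
def wordsOf (n k : ℕ) : List (List ℕ) := (listsOf n k).map (List.map (· + 1))

/-- All permutations of `1, …, n`, as lists. -/
def permsOfLen (n : ℕ) : List (List ℕ) := ((List.range n).map (· + 1)).permutations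

/-! ### Auxiliary development -/

section Aux

open List

/-- identity permutation list -/
def idl (n : ℕ) : List ℕ := (List.range n).map (· + 1)

@[simp] lemma idl_length (n : ℕ) : (idl n).length = n := by simp [idl]

lemma idl_getD {n a : ℕ} (ha : a < n) : (idl n).getD a 0 = a + 1 := by
  rw [List.getD_eq_getElem _ _ (by simpa using ha)]
  simp [idl]

lemma idl_nodup (n : ℕ) : (idl n).Nodup :=
  List.Nodup.map (fun a b h => by omega) List.nodup_range

lemma mem_idl {n v : ℕ} : v ∈ idl n ↔ 1 ≤ v ∧ v ≤ n := by
  simp only [idl, List.mem_map, List.mem_range]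
  constructor
  · rintro ⟨a, ha, rfl⟩; omega
  · rintro ⟨h1, h2⟩; exact ⟨v - 1, by omega, by omega⟩

lemma isPermList_idl (n : ℕ) : IsPermList (idl n) := by
  unfold IsPermList; simp [idl]

lemma IsPermList.nodup {l : List ℕ} (h : IsPermList l) : l.Nodup :=
  h.nodup_iff.mpr (idl_nodup l.length)

lemma IsPermList.mem_iff {l : List ℕ} (h : IsPermList l) {v : ℕ} :
    v ∈ l ↔ 1 ≤ v ∧ v ≤ l.length := by
  rw [List.Perm.mem_iff h]
  exact mem_idl

/-- Pattern embedding via index maps. -/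
def PEmb (z π : List ℕ) (f : ℕ → ℕ) : Prop :=
  (∀ a b, a < b → b < z.length → f a < f b) ∧
  (∀ a, a < z.length → f a < π.length) ∧
  (∀ a b, a < z.length → b < z.length →
    (z.getD a 0 < z.getD b 0 ↔ π.getD (f a) 0 < π.getD (f b) 0))

lemma occursIn_iff {z π : List ℕ} : occursIn z π ↔ ∃ f, PEmb z π f := by
  constructor
  · rintro ⟨s, hs, hlen, hiso⟩
    rw [List.mem_sublists] at hs
    obtain ⟨f, hf⟩ := List.sublist_iff_exists_fin_orderEmbedding_get_eq.mp hs
    refine ⟨fun a => if h : a < s.length then (f ⟨a, h⟩ : ℕ) else 0, ?_, ?_, ?_⟩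
    · intro a b hab hb
      dsimp only
      rw [dif_pos (by omega : a < s.length), dif_pos (by rwa [← hlen])]
      exact f.strictMono (by simpa using hab)
    · intro a ha
      dsimp only
      rw [dif_pos (by rwa [← hlen])]
      exact (f ⟨a, by rwa [← hlen]⟩).isLt
    · intro a b ha hb
      dsimp only
      rw [hiso a ha b hb, dif_pos (by rwa [← hlen]), dif_pos (by rwa [← hlen])]
      rw [List.getD_eq_getElem _ _ (by rwa [← hlen]), List.getD_eq_getElem _ _ (by rwa [← hlen])]
      rw [List.getD_eq_getElem _ _ (f ⟨a, _⟩).isLt, List.getD_eq_getElem _ _ (f ⟨b, _⟩).isLt]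
      have h1 := hf ⟨a, by rwa [← hlen]⟩
      have h2 := hf ⟨b, by rwa [← hlen]⟩
      simp only [List.get_eq_getElem] at h1 h2
      rw [h1, h2]
  · rintro ⟨f, h1, h2, h3⟩
    refine ⟨(List.range z.length).map (fun a => π.getD (f a) 0), ?_, ?_, ?_⟩
    · rw [List.mem_sublists]
      apply List.sublist_iff_exists_fin_orderEmbedding_get_eq.mpr
      refine ⟨OrderEmbedding.ofStrictMono
        (fun i => ⟨f i, h2 i (by simpa using i.isLt)⟩) ?_, ?_⟩
      · intro a b hab
        have : (a : ℕ) < b := hab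
        exact Fin.mk_lt_mk.mpr (h1 a b (by simpa using this) (by simpa using b.isLt))
      · intro i
        have hi : (i : ℕ) < z.length := by simpa using i.isLt
        simp only [List.get_eq_getElem, OrderEmbedding.coe_ofStrictMono]
        rw [List.getElem_map, List.getElem_range, List.getD_eq_getElem _ _ (h2 _ hi)]
        rfl
    · simp
    · intro a ha b hb
      have ha' : a < z.length := ha
      have hb' : b < z.length := by simpa using hb
      rw [h3 a b ha' hb']
      rw [List.getD_eq_getElem ((List.range z.length).map _) _ (by simpa using ha'),
          List.getD_eq_getElem ((List.range z.length).map _) _ (by simpa using hb')]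
      simp

lemma PEmb.occursIn {z π : List ℕ} {f : ℕ → ℕ} (h : PEmb z π f) : occursIn z π :=
  occursIn_iff.mpr ⟨f, h⟩

lemma occursIn_refl (l : List ℕ) : occursIn l l :=
  occursIn_iff.mpr ⟨id, fun _ _ h _ => h, fun _ ha => ha, fun _ _ _ _ => Iff.rfl⟩

lemma occursIn_trans {a b c : List ℕ} (hab : occursIn a b) (hbc : occursIn b c) :
    occursIn a c := by
  obtain ⟨f, f1, f2, f3⟩ := occursIn_iff.mp hab
  obtain ⟨g, g1, g2, g3⟩ := occursIn_iff.mp hbc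
  refine occursIn_iff.mpr ⟨g ∘ f, ?_, ?_, ?_⟩
  · intro x y hxy hy
    exact g1 _ _ (f1 x y hxy hy) (f2 y hy)
  · intro x hx
    exact g2 _ (f2 x hx)
  · intro x y hx hy
    rw [f3 x y hx hy, g3 _ _ (f2 x hx) (f2 y hy)]
    rfl

lemma occursIn_one {w : List ℕ} (hw : w ≠ []) : occursIn [1] w := by
  refine occursIn_iff.mpr ⟨fun _ => 0, ?_, ?_, ?_⟩
  · intro a b hab hb; simp at hb; omega
  · intro a ha
    exact List.length_pos_iff.mpr hw
  · intro a b ha hb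
    simp at ha hb
    subst ha; subst hb; omega

end Aux

section Aux2
open List

lemma mem_permsUpTo {z : List ℕ} {m : ℕ} :
    z ∈ permsUpTo m ↔ IsPermList z ∧ z.length ≤ m := by
  unfold permsUpTo
  simp only [List.mem_flatMap, List.mem_range, List.mem_permutations]
  constructor
  · rintro ⟨k, hk, hperm⟩
    have hlen : z.length = k := by simpa using hperm.length_eq
    constructor
    · unfold IsPermList; rw [hlen]; exact hperm
    · omega
  · rintro ⟨h1, h2⟩
    exact ⟨z.length, by omega, h1⟩

lemma permsUpTo_nodup (m : ℕ) : (permsUpTo m).Nodup := by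
  unfold permsUpTo
  rw [List.nodup_flatMap]
  constructor
  · intro k _
    exact List.nodup_permutations _ (idl_nodup k)
  · rw [List.pairwise_iff_getElem]
    intro a b ha hb hab
    simp only [Function.onFun, List.getElem_range]
    intro z hza hzb
    have h1 : z.length = a := by
      simpa using (List.mem_permutations.mp hza).length_eq
    have h2 : z.length = b := by
      simpa using (List.mem_permutations.mp hzb).length_eq
    simp only [List.length_range] at ha hb
    omega

lemma mem_intervalList {a b z : List ℕ} :
    z ∈ intervalList a b ↔ IsPermList z ∧ z.length ≤ b.length ∧ occursIn a z ∧ occursIn z b := by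
  unfold intervalList
  rw [List.mem_filter, mem_permsUpTo, decide_eq_true_eq]
  tauto

lemma intervalList_nodup (a b : List ℕ) : (intervalList a b).Nodup :=
  (permsUpTo_nodup _).filter _

lemma countP_idx (l : List ℕ) (p : ℕ → Bool) :
    l.countP p = ((List.range l.length).filter (fun i => p (l.getD i 0))).length := by
  induction l with
  | nil => simp
  | cons x t ih =>
    simp only [List.countP_cons, List.length_cons, List.range_succ_eq_map, List.filter_cons,
      List.getD_cons_zero, List.filter_map, List.getD_cons_succ, Function.comp]
    have hfun : ((fun i => p ((x :: t)[i]?.getD 0)) ∘ Nat.succ) = (fun i => p (t[i]?.getD 0)) := by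
      funext i; simp
    by_cases hp : p x
    · simp [hp, ih, hfun]
    · simp [hp, ih, hfun]

lemma countP_range_lt (n m : ℕ) :
    (List.range n).countP (fun j => decide (j < m)) = min m n := by
  induction n with
  | zero => simp
  | succ n ih =>
    rw [List.range_succ, List.countP_append, ih]
    by_cases h : n < m
    · simp only [List.countP_cons, List.countP_nil]
      rw [decide_eq_true h]
      simp; omega
    · simp only [List.countP_cons, List.countP_nil]
      rw [decide_eq_false h]
      simp; omega

lemma permval {l : List ℕ} (h : IsPermList l) {a : ℕ} (ha : a < l.length) :
    l.getD a 0 = l.countP (fun x => decide (x < l.getD a 0)) + 1 := by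
  set v := l.getD a 0 with hv
  have hvm : v ∈ l := by
    rw [hv, List.getD_eq_getElem _ _ ha]; exact List.getElem_mem _
  have hvb : 1 ≤ v ∧ v ≤ l.length := h.mem_iff.mp hvm
  have : l.countP (fun x => decide (x < v)) = (idl l.length).countP (fun x => decide (x < v)) :=
    List.Perm.countP_eq _ h
  rw [this]
  have : (idl l.length).countP (fun x => decide (x < v)) =
      (List.range l.length).countP (fun j => decide (j < v - 1)) := by
    unfold idl
    rw [List.countP_map]
    congr 1; funext j
    simp only [Function.comp]
    by_cases hj : j + 1 < v
    · rw [decide_eq_true hj, decide_eq_true (by omega : j < v - 1)]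
    · rw [decide_eq_false hj, decide_eq_false (by omega : ¬ (j < v - 1))]
  rw [this, countP_range_lt]
  omega

lemma occurs_eq_of_length_eq {z π : List ℕ} (hz : IsPermList z) (hπ : IsPermList π)
    (hocc : occursIn z π) (hlen : z.length = π.length) : z = π := by
  obtain ⟨f, h1, h2, h3⟩ := occursIn_iff.mp hocc
  set n := π.length with hn
  -- f is the identity on [0, n)
  have hge : ∀ a, a < z.length → a ≤ f a := by
    intro a
    induction a with
    | zero => omega
    | succ a ih =>
      intro ha
      have := h1 a (a+1) (by omega) ha
      have := ih (by omega)
      omega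
  have hchain : ∀ j a, a + j < z.length → f a + j ≤ f (a + j) := by
    intro j
    induction j with
    | zero => simp
    | succ j ih =>
      intro a ha
      have := ih a (by omega)
      have := h1 (a + j) (a + j + 1) (by omega) (by omega)
      have h6 : f a + j ≤ f (a + j) := ih a (by omega)
      have h7 : f (a + j) < f (a + j + 1) := h1 (a + j) (a + j + 1) (by omega) (by omega)
      rw [show a + (j + 1) = a + j + 1 by omega]
      omega
  have hid : ∀ a, a < z.length → f a = a := by
    intro a ha
    have hle : a ≤ f a := hge a ha
    have h4 : f a + (z.length - 1 - a) ≤ f (a + (z.length - 1 - a)) := hchain _ a (by omega)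
    have h5 : f (a + (z.length - 1 - a)) < n := h2 _ (by omega)
    omega
  -- positional comparisons coincide
  have hcomp : ∀ a b, a < n → b < n → (z.getD a 0 < z.getD b 0 ↔ π.getD a 0 < π.getD b 0) := by
    intro a b ha hb
    have := h3 a b (by omega) (by omega)
    rwa [hid a (by omega), hid b (by omega)] at this
  apply List.ext_getElem hlen
  intro a h1' h2'
  rw [← List.getD_eq_getElem z 0 h1', ← List.getD_eq_getElem π 0 h2']
  have ha : a < n := by omega
  rw [permval hz (by omega), permval hπ (by omega)]
  congr 1
  rw [countP_idx, countP_idx]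
  have : z.length = n := hlen
  rw [this, hn]
  congr 1
  apply List.filter_congr
  intro i hi
  rw [List.mem_range] at hi
  by_cases hc : z.getD i 0 < z.getD a 0
  · rw [decide_eq_true hc, decide_eq_true ((hcomp i a (by omega) ha).mp hc)]
  · rw [decide_eq_false hc, decide_eq_false (fun hcc => hc ((hcomp i a (by omega) ha).mpr hcc))]

end Aux2

section Aux3
open List

lemma filter_length_eq_card (n : ℕ) (p : ℕ → Bool) :
    ((List.range n).filter p).length = ((Finset.range n).filter (fun i => p i = true)).card := by
  induction n with
  | zero => simp
  | succ n ih =>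
    rw [List.range_succ, List.filter_append, Finset.range_add_one, List.length_append]
    by_cases hp : p n
    · rw [Finset.filter_insert, if_pos hp, Finset.card_insert_of_notMem (by simp)]
      simp [hp, ih]
    · rw [Finset.filter_insert, if_neg (by simp [hp])]
      simp [hp, ih]

lemma exists_descent (π : List ℕ) : ∀ b a, a < b → b < π.length →
    π.getD b 0 < π.getD a 0 → ∃ d, a ≤ d ∧ d < b ∧ π.getD (d+1) 0 < π.getD d 0 := by
  intro b
  induction b with
  | zero => omega
  | succ b ih =>
    intro a ha hb hv
    by_cases hlast : π.getD (b+1) 0 < π.getD b 0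
    · by_cases hab : a ≤ b
      · exact ⟨b, hab, by omega, hlast⟩
      · omega
    · have hba : a < b := by
        rcases Nat.lt_or_ge a b with h | h
        · exact h
        · exfalso
          have : a = b := by omega
          subst this; omega
      obtain ⟨d, hd1, hd2, hd3⟩ := ih a hba (by omega) (by omega)
      exact ⟨d, hd1, by omega, hd3⟩

lemma des_eq_card (l : List ℕ) :
    des l = ((Finset.range (l.length - 1)).filter
      (fun i => l.getD (i+1) 0 < l.getD i 0)).card := by
  unfold des
  rw [filter_length_eq_card]
  simp

lemma des_mono {z π : List ℕ} (hocc : occursIn z π) : des z ≤ des π := by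
  obtain ⟨f, h1, h2, h3⟩ := occursIn_iff.mp hocc
  rw [des_eq_card, des_eq_card]
  classical
  have key : ∀ j, ∃ d, j ∈ (Finset.range (z.length - 1)).filter
      (fun i => z.getD (i+1) 0 < z.getD i 0) →
      f j ≤ d ∧ d < f (j+1) ∧ π.getD (d+1) 0 < π.getD d 0 := by
    intro j
    by_cases hj : j ∈ (Finset.range (z.length - 1)).filter
      (fun i => z.getD (i+1) 0 < z.getD i 0)
    swap
    · exact ⟨0, fun hc => absurd hc hj⟩
    rw [Finset.mem_filter, Finset.mem_range] at hj
    obtain ⟨hj1, hj2⟩ := hj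
    have hj1' : j + 1 < z.length := by omega
    have hv : π.getD (f (j+1)) 0 < π.getD (f j) 0 := (h3 _ _ hj1' (by omega)).mp hj2
    obtain ⟨d, hd⟩ := exists_descent π (f (j+1)) (f j) (h1 j (j+1) (by omega) hj1') (h2 _ hj1') hv
    exact ⟨d, fun _ => hd⟩
  choose φ hφ using key
  have hφ1 : ∀ j hj, f j ≤ φ j := fun j hj => (hφ j hj).1
  have hφ2 : ∀ j hj, φ j < f (j+1) := fun j hj => (hφ j hj).2.1
  have hφ3 : ∀ j hj, π.getD (φ j + 1) 0 < π.getD (φ j) 0 := fun j hj => (hφ j hj).2.2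
  apply Finset.card_le_card_of_injOn φ
  · intro j hj
    rw [Finset.mem_coe, Finset.mem_filter, Finset.mem_range]
    have h4 := hφ1 j hj
    have h5 := hφ2 j hj
    have h6 := hφ3 j hj
    have hj' : j + 1 < z.length := by
      rw [Finset.mem_coe, Finset.mem_filter, Finset.mem_range] at hj; omega
    have := h2 (j+1) hj'
    exact ⟨by omega, h6⟩
  · intro a ha b hb hab
    rw [Finset.mem_coe] at ha hb
    by_contra hne
    rcases Nat.lt_or_ge a b with h | h
    · have haz : a + 1 < z.length := by
        rw [Finset.mem_filter, Finset.mem_range] at ha; omega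
      have hbz : b + 1 < z.length := by
        rw [Finset.mem_filter, Finset.mem_range] at hb; omega
      have : f (a+1) ≤ f b := by
        rcases Nat.lt_or_ge (a+1) b with h' | h'
        · exact le_of_lt (h1 _ _ h' (by omega))
        · have : a + 1 = b := by omega
          rw [this]
      have := hφ1 a ha; have := hφ2 a ha; have := hφ1 b hb; have := hφ2 b hb
      omega
    · have h' : b < a := by omega
      have haz : a + 1 < z.length := by
        rw [Finset.mem_filter, Finset.mem_range] at ha; omega
      have : f (b+1) ≤ f a := by
        rcases Nat.lt_or_ge (b+1) a with h'' | h''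
        · exact le_of_lt (h1 _ _ h'' (by omega))
        · have : b + 1 = a := by omega
          rw [this]
      have := hφ1 a ha; have := hφ2 a ha; have := hφ1 b hb; have := hφ2 b hb
      omega

lemma eq_idl_of_incr {z : List ℕ} (hz : IsPermList z)
    (hincr : ∀ a b, a < z.length → b < z.length → a < b → z.getD a 0 < z.getD b 0) :
    z = idl z.length := by
  have hsorted : z.Pairwise (· < ·) := by
    rw [List.pairwise_iff_getElem]
    intro a b ha hb hab
    have := hincr a b ha hb hab
    rwa [List.getD_eq_getElem _ _ ha, List.getD_eq_getElem _ _ hb] at this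
  have hidl : (idl z.length).Pairwise (· < ·) := by
    rw [List.pairwise_iff_getElem]
    intro a b ha hb hab
    rw [← List.getD_eq_getElem _ 0 ha, ← List.getD_eq_getElem _ 0 hb]
    simp only [idl_length] at ha hb
    rw [idl_getD ha, idl_getD hb]
    omega
  exact List.Perm.eq_of_pairwise (fun a b _ _ h1 h2 => by omega) hsorted hidl hz

lemma eq_idl_of_des_zero {z : List ℕ} (hz : IsPermList z) (hd : des z = 0) :
    z = idl z.length := by
  apply eq_idl_of_incr hz
  have hnodesc : ∀ i, i < z.length - 1 → z.getD i 0 < z.getD (i+1) 0 := by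
    intro i hi
    by_contra hcon
    have hle : z.getD (i+1) 0 ≤ z.getD i 0 := by omega
    have hne : z.getD (i+1) 0 ≠ z.getD i 0 := by
      intro heq
      have := hz.nodup
      rw [List.getD_eq_getElem _ _ (by omega : i + 1 < z.length),
          List.getD_eq_getElem _ _ (by omega : i < z.length)] at heq
      have := (List.Nodup.getElem_inj_iff this).mp heq
      omega
    have hlt : z.getD (i+1) 0 < z.getD i 0 := by omega
    have : i ∈ (List.range (z.length - 1)).filter
        (fun i => decide (z.getD (i+1) 0 < z.getD i 0)) := by
      rw [List.mem_filter, List.mem_range]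
      exact ⟨hi, decide_eq_true hlt⟩
    have : 0 < des z := by
      unfold des
      exact List.length_pos_iff.mpr (fun hnil => by rw [hnil] at this; simp at this)
    omega
  intro a b ha hb hab
  -- chain the adjacent increases
  have : ∀ j, a + j < z.length → z.getD a 0 + j ≤ z.getD (a + j) 0 := by
    intro j
    induction j with
    | zero => simp
    | succ j ih =>
      intro hj
      have h4 := ih (by omega)
      have h5 := hnodesc (a + j) (by omega)
      rw [show a + (j + 1) = (a + j) + 1 by omega]
      omega
  have := this (b - a) (by omega)
  rw [show a + (b - a) = b by omega] at this
  omega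

lemma occursIn_idl_mono {j k : ℕ} (h : j ≤ k) : occursIn (idl j) (idl k) := by
  refine occursIn_iff.mpr ⟨fun a => a, fun _ _ hab _ => hab, ?_, ?_⟩
  · intro a ha
    dsimp only
    simp only [idl_length] at *
    omega
  · intro a b ha hb
    dsimp only
    simp only [idl_length] at ha hb
    rw [idl_getD ha, idl_getD hb, idl_getD (by omega : a < k), idl_getD (by omega : b < k)]

lemma eq_idl_of_occurs_idl {z : List ℕ} {k : ℕ} (hz : IsPermList z)
    (h : occursIn z (idl k)) : z = idl z.length := by
  obtain ⟨f, h1, h2, h3⟩ := occursIn_iff.mp h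
  apply eq_idl_of_incr hz
  intro a b ha hb hab
  rw [h3 a b ha hb]
  simp only [idl_length] at h2
  rw [idl_getD (h2 a ha), idl_getD (h2 b hb)]
  have := h1 a b hab hb
  omega

end Aux3

section Aux4
open List

lemma occursIn_length_le {a b : List ℕ} (h : occursIn a b) : a.length ≤ b.length := by
  obtain ⟨s, hs, hlen, _⟩ := h
  rw [List.mem_sublists] at hs
  rw [hlen]
  exact hs.length_le

lemma idl_ne_nil {m : ℕ} (hm : 1 ≤ m) : idl m ≠ [] := by
  intro h
  have := idl_length m
  rw [h] at this
  simp at this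
  omega

lemma isPermList_one : IsPermList [1] := by
  unfold IsPermList
  show [1] ~ (List.range 1).map (· + 1)
  decide

lemma intervalList_idl_perm {k : ℕ} (hk : 1 ≤ k) :
    (intervalList [1] (idl k)).Perm ((List.range k).map (fun j => idl (j+1))) := by
  apply (List.perm_ext_iff_of_nodup (intervalList_nodup _ _) ?_).mpr
  · intro z
    rw [mem_intervalList, List.mem_map]
    constructor
    · rintro ⟨hp, hlen, hocc1, hocc2⟩
      have hzlen : 1 ≤ z.length := by
        have := occursIn_length_le hocc1; simpa using this
      have hz : z = idl z.length := eq_idl_of_occurs_idl hp hocc2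
      refine ⟨z.length - 1, List.mem_range.mpr ?_, ?_⟩
      · simp only [idl_length] at hlen; omega
      · rw [show z.length - 1 + 1 = z.length by omega]; exact hz.symm
    · rintro ⟨j, hj, rfl⟩
      rw [List.mem_range] at hj
      refine ⟨isPermList_idl _, ?_, ?_, ?_⟩
      · simp only [idl_length]; omega
      · exact occursIn_one (w := idl (j+1)) (idl_ne_nil (by omega))
      · exact occursIn_idl_mono (by omega)
  · apply List.Nodup.map
    · intro a b hab
      have := congrArg List.length hab
      simpa using this
    · exact List.nodup_range

lemma sum_w (m : ℕ) :
    ((List.range m).map (fun j => (if j + 1 = 1 then (1:ℤ) else if j + 1 = 2 then -1 else 0))).sum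
      = if m = 0 then 0 else if m = 1 then 1 else 0 := by
  induction m with
  | zero => simp
  | succ m ih =>
    rw [List.range_succ, List.map_append, List.sum_append, ih]
    simp only [List.map_cons, List.map_nil, List.sum_cons, List.sum_nil]
    split_ifs <;> simp_all

lemma mu_idl {μ : List ℕ → List ℕ → ℤ} (hμ : MoebiusOn μ) :
    ∀ k, 1 ≤ k → μ [1] (idl k) = if k = 1 then 1 else if k = 2 then -1 else 0 := by
  intro k
  induction k using Nat.strong_induction_on with
  | _ k IH =>
  intro hk
  by_cases hk1 : k = 1
  · subst hk1
    have h1 : idl 1 = [1] := by decide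
    rw [h1, if_pos rfl]
    exact hμ.1 [1]
  · have hk2 : 2 ≤ k := by omega
    have hne : ([1] : List ℕ) ≠ idl k := by
      intro hcon
      have : ([1] : List ℕ).length = (idl k).length := by rw [hcon]
      simp only [idl_length, List.length_cons, List.length_nil] at this
      omega
    have heq := hμ.2 [1] (idl k) isPermList_one (isPermList_idl k)
      (occursIn_one (w := idl k) (idl_ne_nil (by omega))) hne
    have hperm := (intervalList_idl_perm (by omega : 1 ≤ k)).map (μ [1])
    rw [hperm.sum_eq, List.map_map] at heq
    rw [show k = (k-1) + 1 by omega, List.range_succ, List.map_append, List.sum_append] at heq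
    simp only [List.map_cons, List.map_nil, List.sum_cons, List.sum_nil, Function.comp] at heq
    rw [show k - 1 + 1 = k by omega] at heq
    have hcong : ((List.range (k-1)).map (μ [1] ∘ fun j => idl (j+1))).sum =
        ((List.range (k-1)).map
          (fun j => (if j + 1 = 1 then (1:ℤ) else if j + 1 = 2 then -1 else 0))).sum := by
      congr 1
      apply List.map_congr_left
      intro j hj
      rw [List.mem_range] at hj
      simp only [Function.comp]
      exact IH (j+1) (by omega) (by omega)
    rw [hcong, sum_w] at heq
    have hk1' : ¬ (k - 1 = 0) := by omega
    rw [if_neg hk1'] at heq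
    by_cases hk2' : k = 2
    · rw [if_pos (by omega : k - 1 = 1)] at heq
      rw [if_neg hk1, if_pos hk2']
      omega
    · rw [if_neg (by omega : ¬ (k - 1 = 1))] at heq
      rw [if_neg hk1, if_neg hk2']
      omega

/-- triple adjacency -/
def trip (l : List ℕ) : Prop :=
  ∃ j, j + 2 < l.length ∧ l.getD (j+1) 0 = l.getD j 0 + 1 ∧ l.getD (j+2) 0 = l.getD j 0 + 2

instance trip_dec : DecidablePred trip := fun l =>
  decidable_of_iff (∃ j ∈ List.range l.length, j + 2 < l.length ∧
      l.getD (j+1) 0 = l.getD j 0 + 1 ∧ l.getD (j+2) 0 = l.getD j 0 + 2)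
    (by constructor
        · rintro ⟨j, _, h⟩; exact ⟨j, h⟩
        · rintro ⟨j, h⟩; exact ⟨j, List.mem_range.mpr (by omega), h⟩)

lemma trip_length {l : List ℕ} (h : trip l) : 3 ≤ l.length := by
  obtain ⟨j, hj, _⟩ := h; omega

end Aux4

section Aux5
open List

/-- decrement values above `v` -/
def dec (v x : ℕ) : ℕ := if v < x then x - 1 else x

lemma dec_lt_dec {v x y : ℕ} (hx : x ≠ v) (hy : y ≠ v) : dec v x < dec v y ↔ x < y := by
  unfold dec; split_ifs <;> omega

/-- delete the entry at position `i` and shift larger values down -/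
def pdel (π : List ℕ) (i : ℕ) : List ℕ := (π.eraseIdx i).map (dec (π.getD i 0))

lemma pdel_length {π : List ℕ} {i : ℕ} (hi : i < π.length) :
    (pdel π i).length = π.length - 1 := by
  simp [pdel, List.length_eraseIdx, hi]

lemma pdel_getD {π : List ℕ} {i j : ℕ} (hi : i < π.length) (hj : j < π.length - 1) :
    (pdel π i).getD j 0 = dec (π.getD i 0) (π.getD (if j < i then j else j + 1) 0) := by
  have hlen : (π.eraseIdx i).length = π.length - 1 := by
    rw [List.length_eraseIdx]; simp [hi]
  have hj' : j < (π.eraseIdx i).length := by omega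
  have hjm : j < ((π.eraseIdx i).map (dec (π.getD i 0))).length := by
    rw [List.length_map]; omega
  rw [pdel, List.getD_eq_getElem _ _ hjm, List.getElem_map, List.getElem_eraseIdx]
  by_cases hcase : j < i
  · rw [dif_pos hcase, if_pos hcase]
    congr 1
    rw [List.getD_eq_getElem _ _ (by omega : j < π.length)]
  · rw [dif_neg hcase, if_neg hcase]
    congr 1
    rw [List.getD_eq_getElem _ _ (by omega : j + 1 < π.length)]

lemma getD_ne_getD {l : List ℕ} (h : l.Nodup) {p q : ℕ} (hp : p < l.length)
    (hq : q < l.length) (hne : p ≠ q) : l.getD p 0 ≠ l.getD q 0 := by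
  rw [List.getD_eq_getElem _ _ hp, List.getD_eq_getElem _ _ hq]
  intro hcon
  exact hne ((List.Nodup.getElem_inj_iff h).mp hcon)

lemma map_dec_erase_idl : ∀ n v : ℕ, 1 ≤ v → v ≤ n →
    ((idl n).erase v).map (dec v) = idl (n - 1) := by
  intro n
  induction n with
  | zero => omega
  | succ n ih =>
    intro v h1 h2
    have hsucc : idl (n+1) = idl n ++ [n+1] := by
      unfold idl; rw [List.range_succ]; simp
    by_cases hv : v = n + 1
    · subst hv
      have hnmem : (n+1) ∉ idl n := by rw [mem_idl]; omega
      rw [hsucc, List.erase_append_right _ hnmem]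
      simp only [List.erase_cons_head, List.append_nil]
      have : ∀ x ∈ idl n, dec (n+1) x = x := by
        intro x hx
        rw [mem_idl] at hx
        unfold dec
        rw [if_neg (by omega)]
      rw [List.map_congr_left this, List.map_id']
      simp
    · have hvn : v ≤ n := by omega
      have hmem1 : v ∈ idl n := by rw [mem_idl]; omega
      rw [hsucc, List.erase_append_left _ hmem1, List.map_append, ih v h1 hvn]
      have hd : dec v (n+1) = n := by unfold dec; rw [if_pos (by omega)]; omega
      have hn1 : 1 ≤ n := by omega
      have hsplit : idl n = idl (n-1) ++ [n] := by
        conv_lhs => rw [show n = (n-1) + 1 by omega]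
        unfold idl
        rw [List.range_succ, List.map_append]
        simp
        omega
      rw [show n + 1 - 1 = n by omega, hsplit]
      simp [hd]

lemma isPermList_pdel {π : List ℕ} {i : ℕ} (hπ : IsPermList π) (hi : i < π.length) :
    IsPermList (pdel π i) := by
  set v := π.getD i 0 with hvdef
  have hvmem : v ∈ π := by
    rw [hvdef, List.getD_eq_getElem _ _ hi]; exact List.getElem_mem _
  have hvb := hπ.mem_iff.mp hvmem
  have hperm1 : π ~ v :: π.eraseIdx i := by
    conv_lhs => rw [← List.take_append_drop i π]
    rw [List.eraseIdx_eq_take_drop_succ]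
    have hdrop : π.drop i = v :: π.drop (i+1) := by
      rw [hvdef, List.getD_eq_getElem _ _ hi]
      exact (List.drop_eq_getElem_cons hi)
    rw [hdrop]
    exact List.perm_middle
  have hperm2 : π.eraseIdx i ~ (idl π.length).erase v := by
    have h3 : v :: π.eraseIdx i ~ v :: (idl π.length).erase v := by
      refine hperm1.symm.trans (List.Perm.trans hπ ?_)
      have hmem2 : v ∈ idl π.length := by rw [mem_idl]; omega
      exact List.perm_cons_erase hmem2
    exact (List.perm_cons _).mp h3
  unfold IsPermList
  have hlen : (pdel π i).length = π.length - 1 := pdel_length hi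
  rw [hlen]
  calc pdel π i = (π.eraseIdx i).map (dec v) := rfl
    _ ~ ((idl π.length).erase v).map (dec v) := hperm2.map _
    _ = (List.range (π.length - 1)).map (· + 1) := map_dec_erase_idl _ _ hvb.1 hvb.2

lemma pdel_occursIn {π : List ℕ} {i : ℕ} (hπ : IsPermList π) (hi : i < π.length) :
    occursIn (pdel π i) π := by
  have hnd := hπ.nodup
  refine occursIn_iff.mpr ⟨fun j => if j < i then j else j + 1, ?_, ?_, ?_⟩
  · intro a b hab hb
    dsimp only; split_ifs <;> omega
  · intro a ha
    rw [pdel_length hi] at ha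
    dsimp only; split_ifs <;> omega
  · intro a b ha hb
    rw [pdel_length hi] at ha hb
    dsimp only
    rw [pdel_getD hi ha, pdel_getD hi hb]
    apply dec_lt_dec
    · apply getD_ne_getD hnd (by split_ifs <;> omega) hi
      split_ifs <;> omega
    · apply getD_ne_getD hnd (by split_ifs <;> omega) hi
      split_ifs <;> omega

lemma occursIn_pdel_of_avoid {z π : List ℕ} {i : ℕ} (hπ : IsPermList π) (hi : i < π.length)
    {f : ℕ → ℕ} (hf : PEmb z π f) (havoid : ∀ t, t < z.length → f t ≠ i) :
    occursIn z (pdel π i) := by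
  obtain ⟨h1, h2, h3⟩ := hf
  have hnd := hπ.nodup
  have hval : ∀ t, t < z.length →
      (pdel π i).getD (if f t < i then f t else f t - 1) 0 = dec (π.getD i 0) (π.getD (f t) 0) := by
    intro t ht
    have hft := h2 t ht
    have hne := havoid t ht
    by_cases hc : f t < i
    · rw [if_pos hc, pdel_getD hi (by omega), if_pos hc]
    · rw [if_neg hc, pdel_getD hi (by omega), if_neg (by omega : ¬ (f t - 1 < i)),
        show f t - 1 + 1 = f t by omega]
  refine occursIn_iff.mpr ⟨fun t => if f t < i then f t else f t - 1, ?_, ?_, ?_⟩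
  · intro a b hab hb
    have h4 := h1 a b hab hb
    have h5 := havoid a (by omega)
    have h6 := havoid b hb
    dsimp only; split_ifs <;> omega
  · intro a ha
    have := h2 a ha
    have := havoid a ha
    rw [pdel_length hi]
    dsimp only; split_ifs <;> omega
  · intro a b ha hb
    rw [h3 a b ha hb]
    dsimp only
    rw [hval a ha, hval b hb]
    exact (dec_lt_dec
      (getD_ne_getD hnd (h2 a ha) hi (havoid a ha))
      (getD_ne_getD hnd (h2 b hb) hi (havoid b hb))).symm

lemma trip_of_run {z π : List ℕ} {i : ℕ} (hz : IsPermList z) {f : ℕ → ℕ}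
    (h1 : ∀ a b, a < b → b < z.length → f a < f b)
    (h2 : ∀ a, a < z.length → f a < π.length)
    (h3 : ∀ a b, a < z.length → b < z.length →
      (z.getD a 0 < z.getD b 0 ↔ π.getD (f a) 0 < π.getD (f b) 0))
    (hi : i + 2 < π.length)
    (hr1 : π.getD (i+1) 0 = π.getD i 0 + 1) (hr2 : π.getD (i+2) 0 = π.getD i 0 + 2)
    {t0 t1 t2 : ℕ} (ht0 : t0 < z.length) (ht1 : t1 < z.length) (ht2 : t2 < z.length)
    (hf0 : f t0 = i) (hf1 : f t1 = i + 1) (hf2 : f t2 = i + 2) : trip z := by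
  have horder : ∀ a b, a < z.length → b < z.length → (f a < f b ↔ a < b) := by
    intro a b ha hb
    constructor
    · intro h
      rcases lt_trichotomy a b with h' | h' | h'
      · exact h'
      · subst h'; omega
      · have := h1 b a h' ha; omega
    · exact fun h => h1 a b h hb
  have h01 : t0 < t1 := (horder t0 t1 ht0 ht1).mp (by omega)
  have h12 : t1 < t2 := (horder t1 t2 ht1 ht2).mp (by omega)
  have hs1 : t1 = t0 + 1 := by
    by_contra hcon
    have hlt : t0 + 1 < t1 := by omega
    have ha := h1 t0 (t0+1) (by omega) (by omega)
    have hb := h1 (t0+1) t1 hlt ht1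
    omega
  have hs2 : t2 = t1 + 1 := by
    by_contra hcon
    have hlt : t1 + 1 < t2 := by omega
    have ha := h1 t1 (t1+1) (by omega) (by omega)
    have hb := h1 (t1+1) t2 hlt ht2
    omega
  have hgb : ∀ a, a < z.length → 1 ≤ z.getD a 0 ∧ z.getD a 0 ≤ z.length := by
    intro a ha
    apply hz.mem_iff.mp
    rw [List.getD_eq_getElem _ _ ha]
    exact List.getElem_mem _
  have hmemz : ∀ w, 1 ≤ w → w ≤ z.length → ∃ a, a < z.length ∧ z.getD a 0 = w := by
    intro w hw1 hw2
    have : w ∈ z := hz.mem_iff.mpr ⟨hw1, hw2⟩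
    obtain ⟨a, ha, hget⟩ := List.mem_iff_getElem.mp this
    exact ⟨a, ha, by rw [List.getD_eq_getElem _ _ ha]; exact hget⟩
  have hcons : ∀ s t, s < z.length → t < z.length → f s + 1 = f t →
      π.getD (f t) 0 = π.getD (f s) 0 + 1 → z.getD t 0 = z.getD s 0 + 1 := by
    intro s t hs ht hfs hv
    have hvlt : z.getD s 0 < z.getD t 0 := (h3 s t hs ht).mpr (by omega)
    by_contra hcon
    have : z.getD s 0 + 1 < z.getD t 0 := by omega
    have hb1 := hgb s hs
    have hb2 := hgb t ht
    obtain ⟨a, ha, hga⟩ := hmemz (z.getD s 0 + 1) (by omega) (by omega)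
    have hlow : π.getD (f s) 0 < π.getD (f a) 0 := (h3 s a hs ha).mp (by omega)
    have hhigh : π.getD (f a) 0 < π.getD (f t) 0 := (h3 a t ha ht).mp (by omega)
    omega
  have hc1 : z.getD t1 0 = z.getD t0 0 + 1 := by
    apply hcons t0 t1 ht0 ht1 (by omega)
    rw [hf0, hf1]; omega
  have hc2 : z.getD t2 0 = z.getD t1 0 + 1 := by
    apply hcons t1 t2 ht1 ht2 (by omega)
    rw [hf1, hf2]; omega
  refine ⟨t0, by omega, ?_, ?_⟩
  · rw [show t0 + 1 = t1 by omega]; omega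
  · rw [show t0 + 2 = t2 by omega]; omega

end Aux5

section Aux6
open List

lemma occursTransfer {z π : List ℕ} {i : ℕ} (hπ : IsPermList π) (hz : IsPermList z)
    (hi : i + 2 < π.length)
    (hr1 : π.getD (i+1) 0 = π.getD i 0 + 1) (hr2 : π.getD (i+2) 0 = π.getD i 0 + 2)
    (hocc : occursIn z π) (htrip : ¬ trip z) : occursIn z (pdel π (i+2)) := by
  obtain ⟨f, h1, h2, h3⟩ := occursIn_iff.mp hocc
  have hnd := hπ.nodup
  set n := π.length with hndef
  set c := π.getD i 0 with hcdef
  have hKa : ∀ q, q < n → q ≠ i → π.getD q 0 ≠ c :=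
    fun q hq hne => getD_ne_getD hnd hq (by omega) hne
  have hKb : ∀ q, q < n → q ≠ i + 1 → π.getD q 0 ≠ c + 1 := by
    intro q hq hne
    rw [← hr1]
    exact getD_ne_getD hnd hq (by omega) hne
  have hKc : ∀ q, q < n → q ≠ i + 2 → π.getD q 0 ≠ c + 2 := by
    intro q hq hne
    rw [← hr2]
    exact getD_ne_getD hnd hq (by omega) hne
  have v0 : π.getD i 0 = c := rfl
  by_cases hC : ∃ t, t < z.length ∧ f t = i + 2
  case neg =>
    exact occursIn_pdel_of_avoid hπ (by omega) ⟨h1, h2, h3⟩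
      (fun t ht hcon => hC ⟨t, ht, hcon⟩)
  obtain ⟨t2, ht2, hft2⟩ := hC
  by_cases hA : ∃ t, t < z.length ∧ f t = i
  · by_cases hB : ∃ t, t < z.length ∧ f t = i + 1
    · exfalso
      obtain ⟨t0, ht0, hft0⟩ := hA
      obtain ⟨t1, ht1, hft1⟩ := hB
      exact htrip (trip_of_run hz h1 h2 h3 hi hr1 hr2 ht0 ht1 ht2 hft0 hft1 hft2)
    · -- branch A : i used, i+1 unused; send i+2 ↦ i+1
      have hBn : ∀ t, t < z.length → f t ≠ i + 1 := by
        intro t ht hcon; exact hB ⟨t, ht, hcon⟩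
      apply occursIn_pdel_of_avoid (f := fun t => if f t = i + 2 then i + 1 else f t)
        hπ (by omega) ⟨?_, ?_, ?_⟩ ?_
      · intro a b hab hb
        have h4 := h1 a b hab hb
        have h5 := hBn a (by omega)
        have h6 := hBn b hb
        dsimp only; split_ifs <;> omega
      · intro a ha
        have := h2 a ha
        dsimp only; split_ifs <;> omega
      · intro a b ha hb
        rw [h3 a b ha hb]
        dsimp only
        have hfa := h2 a ha
        have hfb := h2 b hb
        have ea2 : f a = i + 2 → π.getD (f a) 0 = c + 2 := fun h => by rw [h]; exact hr2
        have eb2 : f b = i + 2 → π.getD (f b) 0 = c + 2 := fun h => by rw [h]; exact hr2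
        have wa1 : π.getD (f a) 0 ≠ c + 1 := hKb _ hfa (hBn a ha)
        have wb1 : π.getD (f b) 0 ≠ c + 1 := hKb _ hfb (hBn b hb)
        have wa2 : f a ≠ i + 2 → π.getD (f a) 0 ≠ c + 2 := fun h => hKc _ hfa h
        have wb2 : f b ≠ i + 2 → π.getD (f b) 0 ≠ c + 2 := fun h => hKc _ hfb h
        split_ifs <;> omega
      · intro t ht
        split_ifs <;> omega
  · have hAn : ∀ t, t < z.length → f t ≠ i := by
      intro t ht hcon; exact hA ⟨t, ht, hcon⟩
    by_cases hB : ∃ t, t < z.length ∧ f t = i + 1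
    · -- branch B : i unused, i+1 used; i+1 ↦ i, i+2 ↦ i+1
      apply occursIn_pdel_of_avoid
        (f := fun t => if f t = i + 2 then i + 1 else if f t = i + 1 then i else f t)
        hπ (by omega) ⟨?_, ?_, ?_⟩ ?_
      · intro a b hab hb
        have h4 := h1 a b hab hb
        have h5 := hAn a (by omega)
        have h6 := hAn b hb
        dsimp only; split_ifs <;> omega
      · intro a ha
        have := h2 a ha
        dsimp only; split_ifs <;> omega
      · intro a b ha hb
        rw [h3 a b ha hb]
        dsimp only
        have hfa := h2 a ha
        have hfb := h2 b hb
        have ea2 : f a = i + 2 → π.getD (f a) 0 = c + 2 := fun h => by rw [h]; exact hr2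
        have eb2 : f b = i + 2 → π.getD (f b) 0 = c + 2 := fun h => by rw [h]; exact hr2
        have ea1 : f a = i + 1 → π.getD (f a) 0 = c + 1 := fun h => by rw [h]; exact hr1
        have eb1 : f b = i + 1 → π.getD (f b) 0 = c + 1 := fun h => by rw [h]; exact hr1
        have wa0 : π.getD (f a) 0 ≠ c := hKa _ hfa (hAn a ha)
        have wb0 : π.getD (f b) 0 ≠ c := hKa _ hfb (hAn b hb)
        have wa1 : f a ≠ i + 1 → π.getD (f a) 0 ≠ c + 1 := fun h => hKb _ hfa h
        have wb1 : f b ≠ i + 1 → π.getD (f b) 0 ≠ c + 1 := fun h => hKb _ hfb h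
        have wa2 : f a ≠ i + 2 → π.getD (f a) 0 ≠ c + 2 := fun h => hKc _ hfa h
        have wb2 : f b ≠ i + 2 → π.getD (f b) 0 ≠ c + 2 := fun h => hKc _ hfb h
        split_ifs <;> omega
      · intro t ht
        split_ifs <;> omega
    · -- branch C only : i, i+1 unused; i+2 ↦ i
      have hBn : ∀ t, t < z.length → f t ≠ i + 1 := by
        intro t ht hcon; exact hB ⟨t, ht, hcon⟩
      apply occursIn_pdel_of_avoid (f := fun t => if f t = i + 2 then i else f t)
        hπ (by omega) ⟨?_, ?_, ?_⟩ ?_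
      · intro a b hab hb
        have h4 := h1 a b hab hb
        have h5 := hAn a (by omega)
        have h6 := hAn b hb
        have h7 := hBn a (by omega)
        have h8 := hBn b hb
        dsimp only; split_ifs <;> omega
      · intro a ha
        have := h2 a ha
        dsimp only; split_ifs <;> omega
      · intro a b ha hb
        rw [h3 a b ha hb]
        dsimp only
        have hfa := h2 a ha
        have hfb := h2 b hb
        have ea2 : f a = i + 2 → π.getD (f a) 0 = c + 2 := fun h => by rw [h]; exact hr2
        have eb2 : f b = i + 2 → π.getD (f b) 0 = c + 2 := fun h => by rw [h]; exact hr2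
        have wa0 : π.getD (f a) 0 ≠ c := hKa _ hfa (hAn a ha)
        have wb0 : π.getD (f b) 0 ≠ c := hKa _ hfb (hAn b hb)
        have wa1 : π.getD (f a) 0 ≠ c + 1 := hKb _ hfa (hBn a ha)
        have wb1 : π.getD (f b) 0 ≠ c + 1 := hKb _ hfb (hBn b hb)
        have wa2 : f a ≠ i + 2 → π.getD (f a) 0 ≠ c + 2 := fun h => hKc _ hfa h
        have wb2 : f b ≠ i + 2 → π.getD (f b) 0 ≠ c + 2 := fun h => hKc _ hfb h
        split_ifs <;> omega
      · intro t ht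
        split_ifs <;> omega

end Aux6

/-- if `π` (length `n > 2`, one descent) has a triple adjacency,
then `μ(1,π) = 0`. -/
theorem moebius_zero_of_triple (μ : List ℕ → List ℕ → ℤ) (hμ : MoebiusOn μ)
    (π : List ℕ) (n : ℕ) (hn : π.length = n) (h2 : 2 < n)
    (hπ : IsPermList π) (hd : des π = 1)
    (h : ∃ i, i + 2 < n ∧ π.getD (i+1) 0 = π.getD i 0 + 1 ∧
          π.getD (i+2) 0 = π.getD i 0 + 2) :
    μ [1] π = 0 := by
  have main : ∀ n π, π.length = n → 2 < n → IsPermList π → des π = 1 →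
      (∃ i, i + 2 < n ∧ π.getD (i+1) 0 = π.getD i 0 + 1 ∧
        π.getD (i+2) 0 = π.getD i 0 + 2) →
      μ [1] π = 0 := by
    clear hn h2 hπ hd h π n
    intro n
    induction n using Nat.strong_induction_on with
    | _ n IH =>
    intro π hn h2 hπ hd h
    obtain ⟨i, hi, hr1, hr2⟩ := h
    have hnπ : π.length = n := hn
    set πm := pdel π (i+2) with hπmdef
    have hilen : i + 2 < π.length := by omega
    have hml : πm.length = n - 1 := by rw [hπmdef, pdel_length hilen, hnπ]
    have hmp : IsPermList πm := isPermList_pdel hπ hilen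
    have hmo : occursIn πm π := pdel_occursIn hπ hilen
    have hπne : π ≠ [] := by intro hcon; rw [hcon] at hnπ; simp at hnπ; omega
    have hocc1π : occursIn [1] π := occursIn_one hπne
    have hmne : πm ≠ [] := by
      intro hcon; rw [hcon] at hml; simp at hml; omega
    have hocc1m : occursIn [1] πm := occursIn_one hmne
    have h1π : ([1] : List ℕ) ≠ π := by
      intro hcon; rw [← hcon] at hnπ; simp at hnπ; omega
    have h1m : ([1] : List ℕ) ≠ πm := by
      intro hcon; rw [← hcon] at hml; simp at hml; omega
    -- μ vanishes on strictly smaller triple-adjacency patterns of π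
    have hsmall : ∀ w, IsPermList w → w.length < n → occursIn w π → trip w →
        μ [1] w = 0 := by
      intro w hw hwlen hwocc hwtrip
      have hwd : des w ≤ 1 := le_trans (des_mono hwocc) (le_of_eq hd)
      have h3w : 3 ≤ w.length := trip_length hwtrip
      rcases Nat.lt_or_ge (des w) 1 with hdw | hdw
      · have h0 : des w = 0 := by omega
        have hwid : w = idl w.length := eq_idl_of_des_zero hw h0
        rw [hwid, mu_idl hμ w.length (by omega)]
        rw [if_neg (by omega), if_neg (by omega)]
      · have hdw1 : des w = 1 := by omega
        obtain ⟨j, hj1, hj2, hj3⟩ := hwtrip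
        exact IH w.length hwlen w rfl (by omega) hw hdw1 ⟨j, hj1, hj2, hj3⟩
    -- the interval of π
    have hsum := hμ.2 [1] π isPermList_one hπ hocc1π h1π
    set L := intervalList [1] π with hLdef
    have hLnd : L.Nodup := intervalList_nodup _ _
    have hπmem : π ∈ L := mem_intervalList.mpr ⟨hπ, le_refl _, hocc1π, occursIn_refl π⟩
    obtain ⟨s, t, hLst⟩ := List.append_of_mem hπmem
    set E := s ++ t with hEdef
    have hperm : List.Perm L (π :: E) := by rw [hLst]; exact List.perm_middle
    have hconsnd : (π :: E).Nodup := (hperm.nodup_iff).mp hLnd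
    rw [List.nodup_cons] at hconsnd
    obtain ⟨hπE, hEnd⟩ := hconsnd
    have hEmem : ∀ w, w ∈ E ↔ (w ≠ π ∧ w ∈ L) := by
      intro w
      constructor
      · intro hw
        refine ⟨fun hcon => hπE (hcon ▸ hw), hperm.mem_iff.mpr (List.mem_cons_of_mem _ hw)⟩
      · rintro ⟨hne, hwL⟩
        rcases List.mem_cons.mp (hperm.mem_iff.mp hwL) with h' | h'
        · exact absurd h' hne
        · exact h'
    have hsum2 : μ [1] π + (E.map (μ [1])).sum = 0 := by
      have h' := (hperm.map (μ [1])).sum_eq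
      rw [List.map_cons, List.sum_cons] at h'
      rw [hsum] at h'
      omega
    have hEsplit : ((E.filter (fun w => decide (trip w))).map (μ [1])).sum
        + ((E.filter (fun w => !decide (trip w))).map (μ [1])).sum
        = (E.map (μ [1])).sum := by
      have h' := ((List.filter_append_perm (fun w => decide (trip w)) E).map (μ [1])).sum_eq
      rw [List.map_append, List.sum_append] at h'
      exact h'
    have hlenlt : ∀ w, w ∈ L → w ≠ π → w.length < n := by
      intro w hwL hwne
      rw [mem_intervalList] at hwL
      obtain ⟨hwperm, hwlen, _, hwocc⟩ := hwL
      rcases Nat.lt_or_ge w.length π.length with h' | h'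
      · omega
      · exact absurd (occurs_eq_of_length_eq hwperm hπ hwocc (by omega)) hwne
    have hz1 : ((E.filter (fun w => decide (trip w))).map (μ [1])).sum = 0 := by
      apply List.sum_eq_zero
      intro x hx
      rw [List.mem_map] at hx
      obtain ⟨w, hwmem, rfl⟩ := hx
      rw [List.mem_filter] at hwmem
      obtain ⟨hwE, hwt⟩ := hwmem
      rw [decide_eq_true_eq] at hwt
      obtain ⟨hwne, hwL⟩ := (hEmem w).mp hwE
      have hwlt := hlenlt w hwL hwne
      rw [mem_intervalList] at hwL
      exact hsmall w hwL.1 hwlt hwL.2.2.2 hwt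
    -- the interval of πm
    have hsumm := hμ.2 [1] πm isPermList_one hmp hocc1m h1m
    set Lm := intervalList [1] πm with hLmdef
    have hLmnd : Lm.Nodup := intervalList_nodup _ _
    have hmsplit : ((Lm.filter (fun w => decide (trip w))).map (μ [1])).sum
        + ((Lm.filter (fun w => !decide (trip w))).map (μ [1])).sum
        = (Lm.map (μ [1])).sum := by
      have h' := ((List.filter_append_perm (fun w => decide (trip w)) Lm).map (μ [1])).sum_eq
      rw [List.map_append, List.sum_append] at h'
      exact h'
    have hz2 : ((Lm.filter (fun w => decide (trip w))).map (μ [1])).sum = 0 := by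
      apply List.sum_eq_zero
      intro x hx
      rw [List.mem_map] at hx
      obtain ⟨w, hwmem, rfl⟩ := hx
      rw [List.mem_filter] at hwmem
      obtain ⟨hwLm, hwt⟩ := hwmem
      rw [decide_eq_true_eq] at hwt
      rw [mem_intervalList] at hwLm
      obtain ⟨hwperm, hwlen, _, hwocc⟩ := hwLm
      rw [hml] at hwlen
      exact hsmall w hwperm (by omega) (occursIn_trans hwocc hmo) hwt
    -- the two non-triple parts coincide
    have hkey : (E.filter (fun w => !decide (trip w))).Perm
        (Lm.filter (fun w => !decide (trip w))) := by
      apply (List.perm_ext_iff_of_nodup (hEnd.filter _) (hLmnd.filter _)).mpr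
      intro w
      rw [List.mem_filter, List.mem_filter, hEmem w]
      constructor
      · rintro ⟨⟨hwne, hwL⟩, hwt⟩
        have hwnt : ¬ trip w := by simpa using hwt
        have hwlt := hlenlt w hwL hwne
        rw [mem_intervalList] at hwL
        obtain ⟨hwperm, hwlen, hw1, hwocc⟩ := hwL
        refine ⟨mem_intervalList.mpr ⟨hwperm, ?_, hw1, ?_⟩, hwt⟩
        · rw [hml]; omega
        · exact occursTransfer hπ hwperm hilen hr1 hr2 hwocc hwnt
      · rintro ⟨hwLm, hwt⟩
        rw [mem_intervalList] at hwLm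
        obtain ⟨hwperm, hwlen, hw1, hwocc⟩ := hwLm
        rw [hml] at hwlen
        refine ⟨⟨?_, mem_intervalList.mpr ⟨hwperm, by omega, hw1, occursIn_trans hwocc hmo⟩⟩, hwt⟩
        intro hcon
        rw [hcon, hnπ] at hwlen
        omega
    have e1 : ((E.filter (fun w => !decide (trip w))).map (μ [1])).sum
        = ((Lm.filter (fun w => !decide (trip w))).map (μ [1])).sum := (hkey.map _).sum_eq
    rw [hsumm] at hmsplit
    rw [← hEsplit, hz1, e1] at hsum2
    omega
  exact main n π hn h2 hπ hd h
end

section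
/- Let σ be a permutation of length m with exactly one descent and exactly i adjacency pairs. Then the letter m lies on the same side of the descent as the letter 1 if and only if m − i is odd. -/
lemma listFilterLen' (p : ℕ → Prop) [DecidablePred p] (n : ℕ) :
    ((List.range n).filter (fun a => decide (p a))).length = ((Finset.range n).filter p).card := by
  simp [Finset.range, Finset.filter, Finset.card, Multiset.range, Multiset.filter_coe]

lemma parity_lemma' (b : ℕ → Bool) (n : ℕ) :
    Even (((Finset.range n).filter (fun t => b (t+1) ≠ b (t+2))).card) ↔ b 1 = b (n+1) := by
  induction n with
  | zero => simp
  | succ n ih =>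
    rw [Finset.range_add_one, Finset.filter_insert]
    by_cases h : b (n+1) ≠ b (n+2)
    · rw [if_pos h, Finset.card_insert_of_notMem (by simp), Nat.even_add_one, ih]
      revert h; cases b 1 <;> cases b (n+1) <;> cases b (n+2) <;> simp
    · rw [if_neg h, ih]
      revert h; cases b 1 <;> cases b (n+1) <;> cases b (n+2) <;> simp

/-- for `σ` of length `m` with exactly one descent (at position `d`, 0-based)
and `i` adjacency pairs: `m` lies on the same side of the descent as `1` iff `m - i` is odd. -/
theorem largest_same_side_iff (σ : List ℕ) (m i : ℕ) (hσ : IsPermList σ)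
    (hm : σ.length = m) (hd : des σ = 1) (hi : tailCount σ = i)
    (d : ℕ) (hd1 : d + 1 < m) (hd2 : σ.getD (d+1) 0 < σ.getD d 0) :
    ((σ.idxOf 1 ≤ d ↔ σ.idxOf m ≤ d)) ↔ Odd (m - i) := by
  have hperm : σ.Perm ((List.range σ.length).map (· + 1)) := hσ
  have hnod : σ.Nodup :=
    hperm.nodup_iff.mpr (List.nodup_range.map (fun a b h => by simpa using h))
  have hmem : ∀ c, c ∈ σ ↔ 1 ≤ c ∧ c ≤ m := by
    intro c
    rw [hperm.mem_iff]
    simp only [List.mem_map, List.mem_range, hm]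
    constructor
    · rintro ⟨a, ha, rfl⟩; omega
    · rintro ⟨h1, h2⟩; exact ⟨c - 1, by omega, by omega⟩
  have getD_mem : ∀ j, j < m → σ.getD j 0 ∈ σ := by
    intro j hj
    rw [List.getD_eq_getElem σ 0 (by omega)]
    exact List.getElem_mem _
  have getD_inj : ∀ j k, j < m → k < m → σ.getD j 0 = σ.getD k 0 → j = k := by
    intro j k hj hk h
    rw [List.getD_eq_getElem σ 0 (show j < σ.length by omega),
      List.getD_eq_getElem σ 0 (show k < σ.length by omega)] at h
    exact (List.Nodup.getElem_inj_iff hnod).mp h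
  have idx_lt : ∀ c, c ∈ σ → σ.idxOf c < m := by
    intro c hc; have := List.idxOf_lt_length_iff.mpr hc; omega
  have getD_idx : ∀ c, c ∈ σ → σ.getD (σ.idxOf c) 0 = c := by
    intro c hc
    rw [List.getD_eq_getElem σ 0 (List.idxOf_lt_length_iff.mpr hc)]
    exact List.getElem_idxOf _
  have idx_getD : ∀ j, j < m → σ.idxOf (σ.getD j 0) = j := by
    intro j hj
    exact getD_inj _ _ (idx_lt _ (getD_mem j hj)) hj (getD_idx _ (getD_mem j hj))
  -- exactly one descent: strictly increasing off position d
  have hstep : ∀ j, j < m - 1 → j ≠ d → σ.getD j 0 < σ.getD (j+1) 0 := by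
    intro j hj hjd
    unfold des at hd
    obtain ⟨a, ha⟩ := List.length_eq_one_iff.mp hd
    have hdm : d ∈ (List.range (σ.length - 1)).filter
        (fun i => decide (σ.getD (i+1) 0 < σ.getD i 0)) :=
      List.mem_filter.mpr ⟨List.mem_range.mpr (by omega), by simpa using hd2⟩
    have hnotdesc : ¬ (σ.getD (j+1) 0 < σ.getD j 0) := by
      intro hlt
      have hjm : j ∈ (List.range (σ.length - 1)).filter
          (fun i => decide (σ.getD (i+1) 0 < σ.getD i 0)) :=
        List.mem_filter.mpr ⟨List.mem_range.mpr (by omega), by simpa using hlt⟩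
      rw [ha] at hdm hjm
      simp only [List.mem_singleton] at hdm hjm
      omega
    have hne : σ.getD j 0 ≠ σ.getD (j+1) 0 := by
      intro h
      have := getD_inj j (j+1) (by omega) (by omega) h
      omega
    omega
  have mono : ∀ q p, p < q → q < m → (q ≤ d ∨ d < p) → σ.getD p 0 < σ.getD q 0 := by
    intro q
    induction q with
    | zero => intro p h1 h2 h3; omega
    | succ q ih =>
      intro p hpq hqm hside
      rcases Nat.lt_or_ge p q with h | h
      · have h1 : σ.getD p 0 < σ.getD q 0 := ih p h (by omega) (by omega)
        have h2 : σ.getD q 0 < σ.getD (q+1) 0 := hstep q (by omega) (by omega)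
        omega
      · have hpq' : p = q := by omega
        subst hpq'
        exact hstep p (by omega) (by omega)
  -- adjacency ↔ same side, in value-shifted form
  have Ksame : ∀ t, t < m - 1 →
      ((σ.idxOf (t+2) = σ.idxOf (t+1) + 1) ↔
        ((σ.idxOf (t+1) ≤ d) ↔ (σ.idxOf (t+2) ≤ d))) := by
    intro t ht
    have hcmem : (t+1) ∈ σ := (hmem _).mpr ⟨by omega, by omega⟩
    have hc1mem : (t+2) ∈ σ := (hmem _).mpr ⟨by omega, by omega⟩
    have hpc := idx_lt _ hcmem
    have hpc1 := idx_lt _ hc1mem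
    have hgc := getD_idx _ hcmem
    have hgc1 := getD_idx _ hc1mem
    constructor
    · intro hadj
      have hpd : σ.idxOf (t+1) ≠ d := by
        intro h
        rw [h] at hgc
        rw [hadj, h] at hgc1
        omega
      omega
    · intro hside
      rcases Nat.lt_trichotomy (σ.idxOf (t+1)) (σ.idxOf (t+2)) with hlt | heq | hgt
      · by_contra hne
        have hgap : σ.idxOf (t+1) + 1 < σ.idxOf (t+2) := by omega
        have hmid1 : σ.getD (σ.idxOf (t+1)) 0 < σ.getD (σ.idxOf (t+1) + 1) 0 :=
          mono _ _ (by omega) (by omega) (by omega)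
        have hmid2 : σ.getD (σ.idxOf (t+1) + 1) 0 < σ.getD (σ.idxOf (t+2)) 0 :=
          mono _ _ (by omega) (by omega) (by omega)
        rw [hgc] at hmid1; rw [hgc1] at hmid2; omega
      · exfalso
        have h2 := hgc
        rw [heq, hgc1] at h2
        omega
      · exfalso
        have := mono _ _ hgt hpc (by omega)
        rw [hgc, hgc1] at this
        omega
  -- counting adjacencies
  have hcount1 : i =
      ((Finset.range m).filter (fun j => 0 < j ∧ σ.getD j 0 = σ.getD (j-1) 0 + 1)).card := by
    rw [← hi]
    unfold tailCount
    rw [hm, listFilterLen']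
  have hcount2 : ((Finset.range m).filter (fun j => 0 < j ∧ σ.getD j 0 = σ.getD (j-1) 0 + 1)).card
      = ((Finset.range (m-1)).filter (fun t => σ.idxOf (t+2) = σ.idxOf (t+1) + 1)).card := by
    apply Finset.card_bij (fun j _ => σ.getD (j-1) 0 - 1)
    · intro j hj
      simp only [Finset.mem_filter, Finset.mem_range] at hj ⊢
      obtain ⟨hjm, hj0, hjv⟩ := hj
      have m1 := (hmem _).mp (getD_mem (j-1) (by omega))
      have m2 := (hmem _).mp (getD_mem j (by omega))
      refine ⟨by omega, ?_⟩
      have e1 : σ.getD (j-1) 0 - 1 + 1 = σ.getD (j-1) 0 := by omega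
      have e2 : σ.getD (j-1) 0 - 1 + 2 = σ.getD j 0 := by omega
      rw [e1, e2, idx_getD j (by omega), idx_getD (j-1) (by omega)]
      omega
    · intro j1 h1 j2 h2 heq
      simp only [Finset.mem_filter, Finset.mem_range] at h1 h2
      have m1 := (hmem _).mp (getD_mem (j1-1) (by omega))
      have m2 := (hmem _).mp (getD_mem (j2-1) (by omega))
      have he : σ.getD (j1-1) 0 = σ.getD (j2-1) 0 := by omega
      have := getD_inj _ _ (by omega) (by omega) he
      omega
    · intro t ht
      simp only [Finset.mem_filter, Finset.mem_range] at ht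
      obtain ⟨htm, hadj⟩ := ht
      have h1m : (t+1) ∈ σ := (hmem _).mpr ⟨by omega, by omega⟩
      have h2m : (t+2) ∈ σ := (hmem _).mpr ⟨by omega, by omega⟩
      have hlt2 := idx_lt _ h2m
      have e : σ.idxOf (t+2) - 1 = σ.idxOf (t+1) := by omega
      refine ⟨σ.idxOf (t+2), ?_, ?_⟩
      · simp only [Finset.mem_filter, Finset.mem_range]
        refine ⟨hlt2, by omega, ?_⟩
        rw [e, getD_idx _ h1m, getD_idx _ h2m]
      · rw [e, getD_idx _ h1m]
        omega
  have hcount3 : ((Finset.range (m-1)).filter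
        (fun t => σ.idxOf (t+2) = σ.idxOf (t+1) + 1)).card
      = ((Finset.range (m-1)).filter
        (fun t => (σ.idxOf (t+1) ≤ d ↔ σ.idxOf (t+2) ≤ d))).card := by
    congr 1
    apply Finset.filter_congr
    intro t ht
    simp only [Finset.mem_range] at ht
    exact Ksame t ht
  -- parity
  set b : ℕ → Bool := fun c => decide (σ.idxOf c ≤ d) with hb
  have hswitch : ((Finset.range (m-1)).filter
        (fun t => ¬(σ.idxOf (t+1) ≤ d ↔ σ.idxOf (t+2) ≤ d))).card
      = ((Finset.range (m-1)).filter (fun t => b (t+1) ≠ b (t+2))).card := by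
    congr 1
    apply Finset.filter_congr
    intro t ht
    simp [hb, Ne, decide_eq_decide]
  have hsplit : ((Finset.range (m-1)).filter
        (fun t => (σ.idxOf (t+1) ≤ d ↔ σ.idxOf (t+2) ≤ d))).card
      + ((Finset.range (m-1)).filter
        (fun t => ¬(σ.idxOf (t+1) ≤ d ↔ σ.idxOf (t+2) ≤ d))).card = m - 1 := by
    rw [Finset.card_filter_add_card_filter_not, Finset.card_range]
  have hpar := parity_lemma' b (m-1)
  have hm1 : m - 1 + 1 = m := by omega
  rw [hm1] at hpar
  have hieq : i = ((Finset.range (m-1)).filter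
      (fun t => (σ.idxOf (t+1) ≤ d ↔ σ.idxOf (t+2) ≤ d))).card := by
    rw [hcount1, hcount2, hcount3]
  have hswval : ((Finset.range (m-1)).filter (fun t => b (t+1) ≠ b (t+2))).card = m - 1 - i := by
    omega
  rw [hswval] at hpar
  have hfin : (b 1 = b m) ↔ (σ.idxOf 1 ≤ d ↔ σ.idxOf m ≤ d) := by
    simp [hb, decide_eq_decide]
  have hile : i ≤ m - 1 := by
    rw [hieq]
    calc _ ≤ (Finset.range (m-1)).card := Finset.card_filter_le _ _
    _ = m - 1 := Finset.card_range _
  have hodd : Odd (m - i) ↔ Even (m - 1 - i) := by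
    have : m - i = (m - 1 - i) + 1 := by omega
    rw [this, Nat.odd_add_one]
    exact Nat.not_odd_iff_even
  rw [hodd, hpar, ← hfin]
end
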